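/- Let m ≥ 1. Any two countably infinite existentially closed K_{m,1}-free incidence structures are isomorphic. -/

import Mathlib

set_option linter.unusedSectionVars false
set_option linter.unusedVariables false
set_option linter.unnecessarySeqFocus false


open FirstOrder FirstOrder.Language

universe u v

/-- Relation symbols of the language of incidence structures: two unary symbols
(`pt` for "point", `lin` for "line") and one binary symbol (`inc` for "incidence"). -/
inductive IncRel : ℕ → Type
  | pt : IncRel 1
  | lin : IncRel 1
  | inc : IncRel 2

/-- The first-order language `{P, L, I}` of incidence structures. -/
def IncLang : FirstOrder.Language := ⟨fun _ => Empty, IncRel⟩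

section
variable {M : Type u} [IncLang.Structure M]

/-- `x` is a point. -/
def ptL (x : M) : Prop := Structure.RelMap (L := IncLang) IncRel.pt ![x]

/-- `x` is a line. -/
def lnL (x : M) : Prop := Structure.RelMap (L := IncLang) IncRel.lin ![x]

/-- `x` is incident to `y`. -/
def incL (x y : M) : Prop := Structure.RelMap (L := IncLang) IncRel.inc ![x, y]

end

/-- `M` is an incidence structure: points and lines partition the domain, and
incidence only holds between a point and a line. -/
def IsIncidenceL (M : Type u) [IncLang.Structure M] : Prop :=
  (∀ x : M, ptL x ∨ lnL x) ∧ (∀ x : M, ¬(ptL x ∧ lnL x)) ∧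
    ∀ x y : M, incL x y → ptL x ∧ lnL y

/-- `M` is `K_{m,n}`-free: there are no `m` pairwise distinct points and `n` pairwise
distinct lines with every one of the points incident to every one of the lines. -/
def KFreeL (m n : ℕ) (M : Type u) [IncLang.Structure M] : Prop :=
  ¬∃ (a : Fin m → M) (b : Fin n → M),
      Function.Injective a ∧ Function.Injective b ∧
      (∀ i, ptL (a i)) ∧ (∀ j, lnL (b j)) ∧ ∀ i j, incL (a i) (b j)

/-- `M` is an existentially closed `K_{m,n}`-free incidence structure: `M` is a
`K_{m,n}`-free incidence structure, and for every `K_{m,n}`-free incidence structure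
`N` containing `M` as an induced substructure (i.e. admitting an embedding of `M`),
every existential formula `∃ ȳ φ(ā, ȳ)` (with `φ` quantifier-free and parameters `ā`
from `M`) that holds in `N` also holds in `M`. -/
def IsECL (m n : ℕ) (M : Type u) [IncLang.Structure M] : Prop :=
  IsIncidenceL M ∧ KFreeL m n M ∧
    ∀ (N : Type u) [IncLang.Structure N], IsIncidenceL N → KFreeL m n N →
      ∀ (f : M ↪[IncLang] N) (k : ℕ) (φ : IncLang.BoundedFormula M k), φ.IsQF →
        (∃ xs : Fin k → N, φ.Realize (f : M → N) xs) →
          ∃ xs : Fin k → M, φ.Realize (id : M → M) xs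

/-! Helpers -/

lemma fin1_eta {α : Type*} (x : Fin 1 → α) : x = ![x 0] := by
  funext i; fin_cases i <;> rfl

lemma fin2_eta {α : Type*} (x : Fin 2 → α) : x = ![x 0, x 1] := by
  funext i; fin_cases i <;> rfl

section Ext
variable {M : Type u} [IncLang.Structure M]

/-- Extension of `M` by one new element (`none`): a point if `b = true`, otherwise a line,
incident exactly to the elements of `T`. -/
def extStruct (b : Bool) (T : Set M) : IncLang.Structure (Option M) where
  funMap := fun f _ => f.elim
  RelMap := fun {n} r =>
    match r with
    | IncRel.pt => fun v => match v 0 with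
        | none => b = true
        | some a => ptL a
    | IncRel.lin => fun v => match v 0 with
        | none => b = false
        | some a => lnL a
    | IncRel.inc => fun v => match v 0, v 1 with
        | some a, some c => incL a c
        | none, some c => b = true ∧ c ∈ T
        | some a, none => b = false ∧ a ∈ T
        | none, none => False

lemma extStruct_pt_some (b : Bool) (T : Set M) (a : M) :
    (letI := extStruct b T; ptL (some a : Option M)) ↔ ptL a := Iff.rfl

lemma extStruct_pt_none (b : Bool) (T : Set M) :
    (letI := extStruct b T; ptL (none : Option M)) ↔ b = true := Iff.rfl

lemma extStruct_ln_some (b : Bool) (T : Set M) (a : M) :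
    (letI := extStruct b T; lnL (some a : Option M)) ↔ lnL a := Iff.rfl

lemma extStruct_ln_none (b : Bool) (T : Set M) :
    (letI := extStruct b T; lnL (none : Option M)) ↔ b = false := Iff.rfl

lemma extStruct_inc_some_some (b : Bool) (T : Set M) (a c : M) :
    (letI := extStruct b T; incL (some a : Option M) (some c)) ↔ incL a c := Iff.rfl

lemma extStruct_inc_none_some (b : Bool) (T : Set M) (c : M) :
    (letI := extStruct b T; incL (none : Option M) (some c)) ↔ (b = true ∧ c ∈ T) := Iff.rfl

lemma extStruct_inc_some_none (b : Bool) (T : Set M) (a : M) :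
    (letI := extStruct b T; incL (some a : Option M) (none : Option M)) ↔ (b = false ∧ a ∈ T) :=
  Iff.rfl

lemma extStruct_inc_none_none (b : Bool) (T : Set M) :
    (letI := extStruct b T; incL (none : Option M) (none : Option M)) ↔ False := Iff.rfl

/-- The canonical embedding of `M` into its extension. -/
def extEmb (b : Bool) (T : Set M) : letI := extStruct b T; M ↪[IncLang] Option M :=
  letI := extStruct b T
  { toFun := some
    inj' := Option.some_injective M
    map_fun' := fun {n} f _ => f.elim
    map_rel' := fun {n} r x => by
      cases r with
      | pt => rw [show x = ![x 0] from fin1_eta x]; exact Iff.rfl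
      | lin => rw [show x = ![x 0] from fin1_eta x]; exact Iff.rfl
      | inc => rw [show x = ![x 0, x 1] from fin2_eta x]; exact Iff.rfl }

end Ext

/-! Cardinality helpers -/

lemma exists_inj_of_le_ncard {α : Type*} {s : Set α} {n : ℕ} (hs : s.Finite) (h : n ≤ s.ncard) :
    ∃ a : Fin n → α, Function.Injective a ∧ ∀ i, a i ∈ s := by
  obtain ⟨t, hts, htcard⟩ := Set.exists_subset_card_eq h
  have htf : t.Finite := hs.subset hts
  have hcard : htf.toFinset.card = n := by
    rw [← Set.ncard_eq_toFinset_card t htf, htcard]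
  let e := Finset.equivFinOfCardEq hcard
  refine ⟨fun i => (e.symm i : α), ?_, fun i => hts (htf.mem_toFinset.1 (e.symm i).2)⟩
  intro i j hij
  exact e.symm.injective (Subtype.ext hij)

lemma le_ncard_of_inj {α : Type*} {s : Set α} {n : ℕ} (hs : s.Finite) (a : Fin n → α)
    (ha : Function.Injective a) (hmem : ∀ i, a i ∈ s) : n ≤ s.ncard := by
  have h1 : (Set.range a).ncard = n := by
    rw [← Nat.card_coe_set_eq, Nat.card_range_of_injective ha, Nat.card_eq_fintype_card,
      Fintype.card_fin]
  calc n = (Set.range a).ncard := h1.symm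
    _ ≤ s.ncard := Set.ncard_le_ncard (Set.range_subset_iff.2 hmem) hs

lemma set_infinite_of_avoid {α : Type*} {s : Set α} (h : ∀ t : Finset α, ∃ x ∈ s, x ∉ t) :
    s.Infinite := by
  intro hfin
  obtain ⟨x, hx, hnx⟩ := h hfin.toFinset
  exact hnx (hfin.mem_toFinset.2 hx)

section ExtProps
variable {M : Type u} [IncLang.Structure M]

lemma extStruct_isIncidence (b : Bool) (T : Set M) (hM : IsIncidenceL M)
    (hT : ∀ a ∈ T, if b then lnL a else ptL a) :
    letI := extStruct b T; IsIncidenceL (Option M) := by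
  letI := extStruct b T
  refine ⟨?_, ?_, ?_⟩
  · rintro (_ | a)
    · cases b
      · exact Or.inr (extStruct_ln_none _ _ |>.2 rfl)
      · exact Or.inl (extStruct_pt_none _ _ |>.2 rfl)
    · rcases hM.1 a with h | h
      · exact Or.inl ((extStruct_pt_some b T a).2 h)
      · exact Or.inr ((extStruct_ln_some b T a).2 h)
  · rintro (_ | a) ⟨h1, h2⟩
    · rw [extStruct_pt_none] at h1; rw [extStruct_ln_none] at h2
      rw [h1] at h2; cases h2
    · exact hM.2.1 a ⟨(extStruct_pt_some b T a).1 h1, (extStruct_ln_some b T a).1 h2⟩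
  · rintro (_ | a) (_ | c) h
    · exact absurd h (extStruct_inc_none_none b T).1
    · rcases (extStruct_inc_none_some b T c).1 h with ⟨hb, hcT⟩
      have := hT c hcT
      rw [hb] at this ⊢
      exact ⟨(extStruct_pt_none _ _).2 rfl, (extStruct_ln_some _ _ _).2 (by simpa using this)⟩
    · rcases (extStruct_inc_some_none b T a).1 h with ⟨hb, haT⟩
      have := hT a haT
      rw [hb] at this ⊢
      exact ⟨(extStruct_pt_some _ _ _).2 (by simpa using this), (extStruct_ln_none _ _).2 rfl⟩
    · rcases hM.2.2 a c ((extStruct_inc_some_some b T a c).1 h) with ⟨h1, h2⟩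
      exact ⟨(extStruct_pt_some _ _ _).2 h1, (extStruct_ln_some _ _ _).2 h2⟩
end ExtProps

section ExtKFree
variable {M : Type u} [IncLang.Structure M]

lemma extStruct_kfree_pt (m : ℕ) (hm : 1 ≤ m) (T : Set M) (hK : KFreeL m 1 M)
    (hsmall : ∀ c ∈ T, ∀ a : Fin (m - 1) → M, Function.Injective a → (∀ i, ptL (a i)) →
      ¬∀ i, incL (a i) c) :
    letI := extStruct true T; KFreeL m 1 (Option M) := by
  letI := extStruct true T
  rintro ⟨a, bb, ha, hb, hpt, hln, hinc⟩
  cases hl : bb 0 with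
  | none =>
    have h := hln 0
    rw [hl] at h
    exact absurd ((extStruct_ln_none true T).1 h) (by simp)
  | some c =>
    by_cases hnone : ∃ i0, a i0 = none
    · obtain ⟨i0, hi0⟩ := hnone
      have hcT : c ∈ T := by
        have := hinc i0 0
        rw [hi0, hl] at this
        exact ((extStruct_inc_none_some true T c).1 this).2
      obtain ⟨k, rfl⟩ : ∃ k, m = k + 1 := ⟨m - 1, (Nat.succ_pred_eq_of_pos hm).symm⟩
      have hsome : ∀ i : Fin k, ∃ x : M, a (i0.succAbove i) = some x := by
        intro i
        cases hx : a (i0.succAbove i) with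
        | none => exact absurd (ha (hx.trans hi0.symm)) (Fin.succAbove_ne i0 i)
        | some x => exact ⟨x, rfl⟩
      choose a' ha' using hsome
      refine hsmall c hcT a' ?_ ?_ ?_
      · intro i j hij
        apply Fin.succAbove_right_injective (p := i0)
        apply ha
        rw [ha' i, ha' j, hij]
      · intro i
        have := hpt (i0.succAbove i)
        rw [ha' i] at this
        exact (extStruct_pt_some _ _ _).1 this
      · intro i
        have h2 := hinc (i0.succAbove i) 0
        rw [ha' i, hl] at h2
        exact (extStruct_inc_some_some _ _ _ _).1 h2
    · push_neg at hnone
      have hsome : ∀ i, ∃ x : M, a i = some x := by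
        intro i
        cases hx : a i with
        | none => exact absurd hx (hnone i)
        | some x => exact ⟨x, rfl⟩
      choose a' ha' using hsome
      apply hK
      refine ⟨a', fun _ => c, ?_, fun i j _ => Subsingleton.elim i j, ?_, ?_, ?_⟩
      · intro i j hij
        apply ha
        rw [ha' i, ha' j, hij]
      · intro i
        have := hpt i
        rw [ha' i] at this
        exact (extStruct_pt_some _ _ _).1 this
      · intro _
        have := hln 0
        rw [hl] at this
        exact (extStruct_ln_some _ _ _).1 this
      · intro i _
        have := hinc i 0
        rw [ha' i, hl] at this
        exact (extStruct_inc_some_some _ _ _ _).1 this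

lemma extStruct_kfree_ln (m : ℕ) (T : Set M) (hK : KFreeL m 1 M)
    (hsmall : ∀ a : Fin m → M, Function.Injective a → ¬∀ i, a i ∈ T) :
    letI := extStruct false T; KFreeL m 1 (Option M) := by
  letI := extStruct false T
  rintro ⟨a, bb, ha, hb, hpt, hln, hinc⟩
  have hsome : ∀ i, ∃ x : M, a i = some x := by
    intro i
    cases hx : a i with
    | none =>
      have := hpt i
      rw [hx] at this
      exact absurd ((extStruct_pt_none false T).1 this) (by simp)
    | some x => exact ⟨x, rfl⟩
  choose a' ha' using hsome
  have ha'inj : Function.Injective a' := by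
    intro i j hij
    apply ha
    rw [ha' i, ha' j, hij]
  cases hl : bb 0 with
  | none =>
    refine hsmall a' ha'inj (fun i => ?_)
    have := hinc i 0
    rw [ha' i, hl] at this
    exact ((extStruct_inc_some_none false T (a' i)).1 this).2
  | some c =>
    apply hK
    refine ⟨a', fun _ => c, ha'inj, fun i j _ => Subsingleton.elim i j, ?_, ?_, ?_⟩
    · intro i
      have := hpt i
      rw [ha' i] at this
      exact (extStruct_pt_some _ _ _).1 this
    · intro _
      have := hln 0
      rw [hl] at this
      exact (extStruct_ln_some _ _ _).1 this
    · intro i _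
      have := hinc i 0
      rw [ha' i, hl] at this
      exact (extStruct_inc_some_some _ _ _ _).1 this

end ExtKFree

/-! Formulas -/

section Formulas
variable {M : Type u} [IncLang.Structure M]

def xv {M : Type u} : IncLang.Term (M ⊕ Fin 1) := Term.var (Sum.inr 0)

def cst {M : Type u} (a : M) : IncLang.Term (M ⊕ Fin 1) := Term.var (Sum.inl a)

def fPt (t : IncLang.Term (M ⊕ Fin 1)) : IncLang.BoundedFormula M 1 :=
  Relations.boundedFormula₁ IncRel.pt t

def fLn (t : IncLang.Term (M ⊕ Fin 1)) : IncLang.BoundedFormula M 1 :=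
  Relations.boundedFormula₁ IncRel.lin t

def fInc (t₁ t₂ : IncLang.Term (M ⊕ Fin 1)) : IncLang.BoundedFormula M 1 :=
  Relations.boundedFormula₂ IncRel.inc t₁ t₂

def fNe (t₁ t₂ : IncLang.Term (M ⊕ Fin 1)) : IncLang.BoundedFormula M 1 :=
  (t₁.bdEqual t₂).not

def listAnd : List (IncLang.BoundedFormula M 1) → IncLang.BoundedFormula M 1
  | [] => ⊤
  | φ :: l => φ ⊓ listAnd l

lemma fPt_isQF (t : IncLang.Term (M ⊕ Fin 1)) : (fPt t).IsQF :=
  (BoundedFormula.IsAtomic.rel _ _).isQF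

lemma fLn_isQF (t : IncLang.Term (M ⊕ Fin 1)) : (fLn t).IsQF :=
  (BoundedFormula.IsAtomic.rel _ _).isQF

lemma fInc_isQF (t₁ t₂ : IncLang.Term (M ⊕ Fin 1)) : (fInc t₁ t₂).IsQF :=
  (BoundedFormula.IsAtomic.rel _ _).isQF

lemma fNe_isQF (t₁ t₂ : IncLang.Term (M ⊕ Fin 1)) : (fNe t₁ t₂).IsQF :=
  (BoundedFormula.IsAtomic.equal _ _).isQF.not

lemma listAnd_isQF (l : List (IncLang.BoundedFormula M 1)) (h : ∀ φ ∈ l, φ.IsQF) :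
    (listAnd l).IsQF := by
  induction l with
  | nil => exact BoundedFormula.IsQF.top
  | cons φ l ih =>
    exact (h φ List.mem_cons_self).inf (ih fun ψ hψ => h ψ (List.mem_cons_of_mem _ hψ))

variable {S : Type*} [IncLang.Structure S] (v : M → S) (xs : Fin 1 → S)

lemma realize_fPt (t : IncLang.Term (M ⊕ Fin 1)) :
    (fPt t).Realize v xs ↔ ptL (t.realize (Sum.elim v xs)) :=
  BoundedFormula.realize_rel₁

lemma realize_fLn (t : IncLang.Term (M ⊕ Fin 1)) :
    (fLn t).Realize v xs ↔ lnL (t.realize (Sum.elim v xs)) :=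
  BoundedFormula.realize_rel₁

lemma realize_fInc (t₁ t₂ : IncLang.Term (M ⊕ Fin 1)) :
    (fInc t₁ t₂).Realize v xs ↔ incL (t₁.realize (Sum.elim v xs)) (t₂.realize (Sum.elim v xs)) :=
  BoundedFormula.realize_rel₂

lemma realize_fNe (t₁ t₂ : IncLang.Term (M ⊕ Fin 1)) :
    (fNe t₁ t₂).Realize v xs ↔ ¬(t₁.realize (Sum.elim v xs) = t₂.realize (Sum.elim v xs)) := by
  rw [fNe, BoundedFormula.realize_not, BoundedFormula.realize_bdEqual]

lemma realize_listAnd (l : List (IncLang.BoundedFormula M 1)) :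
    (listAnd l).Realize v xs ↔ ∀ φ ∈ l, φ.Realize v xs := by
  induction l with
  | nil => simp [listAnd]
  | cons φ l ih => simp [listAnd, BoundedFormula.realize_inf, ih]

lemma realize_xv : (xv (M := M)).realize (Sum.elim v xs) = xs 0 := rfl

lemma realize_cst (a : M) : (cst a).realize (Sum.elim v xs) = v a := rfl

end Formulas

/-! Consequences of existential closedness -/

section ECFacts
variable {m : ℕ} {M : Type u} [IncLang.Structure M]

lemma no_m_on_line (hK : KFreeL m 1 M) (hInc : IsIncidenceL M) {l : M} (hl : lnL l)
    (a : Fin m → M) (ha : Function.Injective a) (hal : ∀ i, incL (a i) l) : False :=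
  hK ⟨a, fun _ => l, ha, fun i j _ => Subsingleton.elim i j,
    fun i => (hInc.2.2 _ _ (hal i)).1, fun _ => hl, fun i _ => hal i⟩

lemma ptsOn_finite (hK : KFreeL m 1 M) (hInc : IsIncidenceL M) {l : M} (hl : lnL l) :
    ({p : M | incL p l}).Finite := by
  by_contra hinf
  obtain ⟨t, hts, htf, htcard⟩ := Set.Infinite.exists_subset_ncard_eq hinf m
  obtain ⟨a, ha, hmem⟩ := exists_inj_of_le_ncard htf htcard.ge
  exact no_m_on_line hK hInc hl a ha fun i => hts (hmem i)

lemma ptsOn_ncard_le (hm : 1 ≤ m) (hK : KFreeL m 1 M) (hInc : IsIncidenceL M) {l : M}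
    (hl : lnL l) : ({p : M | incL p l}).ncard ≤ m - 1 := by
  by_contra hcon
  push_neg at hcon
  have hle : m ≤ ({p : M | incL p l}).ncard := by omega
  obtain ⟨a, ha, hmem⟩ := exists_inj_of_le_ncard (ptsOn_finite hK hInc hl) hle
  exact no_m_on_line hK hInc hl a ha hmem

variable (hm : 1 ≤ m) (hM : IsECL m 1 M)
include hm hM

lemma ec_point_avoiding (s : Finset M) : ∃ p : M, ptL p ∧ p ∉ s := by
  classical
  set φ : IncLang.BoundedFormula M 1 :=
    fPt xv ⊓ listAnd (s.toList.map fun a => fNe xv (cst a)) with hφ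
  have hqf : φ.IsQF := (fPt_isQF _).inf (listAnd_isQF _ (by
    intro ψ hψ
    simp only [List.mem_map] at hψ
    obtain ⟨a, _, rfl⟩ := hψ
    exact fNe_isQF _ _))
  letI := extStruct (M := M) true ∅
  have hIncO := extStruct_isIncidence true ∅ hM.1 (by simp)
  have hKO := extStruct_kfree_pt m hm ∅ hM.2.1 (by simp)
  have hreal : ∃ xs : Fin 1 → Option M, φ.Realize ((extEmb true ∅ : M ↪[IncLang] Option M) : M → Option M) xs := by
    refine ⟨fun _ => none, ?_⟩
    rw [hφ, BoundedFormula.realize_inf]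
    constructor
    · rw [realize_fPt, realize_xv]
      exact (extStruct_pt_none true ∅).2 rfl
    · rw [realize_listAnd]
      intro ψ hψ
      simp only [List.mem_map] at hψ
      obtain ⟨a, _, rfl⟩ := hψ
      rw [realize_fNe, realize_xv, realize_cst]
      exact fun h => by cases h
  obtain ⟨xs, hxs⟩ := hM.2.2 (Option M) hIncO hKO (extEmb true ∅) 1 φ hqf hreal
  rw [hφ, BoundedFormula.realize_inf, realize_fPt, realize_xv, realize_listAnd] at hxs
  refine ⟨xs 0, hxs.1, fun hmem => ?_⟩
  have := hxs.2 (fNe xv (cst (xs 0))) (List.mem_map.2 ⟨xs 0, Finset.mem_toList.2 hmem, rfl⟩)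
  rw [realize_fNe, realize_xv, realize_cst] at this
  exact this rfl

lemma ec_line_pts {l : M} (hl : lnL l) : ({p : M | incL p l}).ncard = m - 1 := by
  classical
  refine le_antisymm (ptsOn_ncard_le hm hM.2.1 hM.1 hl) ?_
  by_contra hcon
  push_neg at hcon
  have hfin := ptsOn_finite hM.2.1 hM.1 hl
  set φ : IncLang.BoundedFormula M 1 :=
    fPt xv ⊓ (fInc xv (cst l) ⊓ listAnd (hfin.toFinset.toList.map fun a => fNe xv (cst a)))
      with hφ
  have hqf : φ.IsQF := (fPt_isQF _).inf ((fInc_isQF _ _).inf (listAnd_isQF _ (by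
    intro ψ hψ
    simp only [List.mem_map] at hψ
    obtain ⟨a, _, rfl⟩ := hψ
    exact fNe_isQF _ _)))
  letI := extStruct (M := M) true {l}
  have hIncO := extStruct_isIncidence true {l} hM.1 (by simpa using hl)
  have hKO := extStruct_kfree_pt m hm {l} hM.2.1 (by
    intro c hc a ha hpt hinc
    rw [Set.mem_singleton_iff] at hc
    subst hc
    have := le_ncard_of_inj hfin a ha fun i => hinc i
    omega)
  have hreal : ∃ xs : Fin 1 → Option M,
      φ.Realize ((extEmb true {l} : M ↪[IncLang] Option M) : M → Option M) xs := by
    refine ⟨fun _ => none, ?_⟩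
    rw [hφ, BoundedFormula.realize_inf, BoundedFormula.realize_inf]
    refine ⟨(realize_fPt _ _ _).2 ((extStruct_pt_none true {l}).2 rfl), ?_, ?_⟩
    · rw [realize_fInc, realize_xv, realize_cst]
      exact (extStruct_inc_none_some true {l} l).2 ⟨rfl, rfl⟩
    · rw [realize_listAnd]
      intro ψ hψ
      simp only [List.mem_map] at hψ
      obtain ⟨a, _, rfl⟩ := hψ
      rw [realize_fNe, realize_xv, realize_cst]
      exact fun h => by cases h
  obtain ⟨xs, hxs⟩ := hM.2.2 (Option M) hIncO hKO (extEmb true {l}) 1 φ hqf hreal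
  rw [hφ, BoundedFormula.realize_inf, BoundedFormula.realize_inf, realize_fPt,
    realize_listAnd, realize_fInc, realize_xv, realize_cst] at hxs
  have hmem : xs 0 ∈ {p : M | incL p l} := hxs.2.1
  have := hxs.2.2 (fNe xv (cst (xs 0)))
    (List.mem_map.2 ⟨xs 0, hfin.mem_toFinset.2 hmem |> (fun h => Finset.mem_toList.2 h), rfl⟩)
  rw [realize_fNe, realize_xv, realize_cst] at this
  exact this rfl

lemma ec_line_through (S : Set M) (hSf : S.Finite) (hcard : S.ncard = m - 1)
    (hSpt : ∀ p ∈ S, ptL p) (s : Finset M) :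
    ∃ l : M, lnL l ∧ l ∉ s ∧ ∀ p ∈ S, incL p l := by
  classical
  set φ : IncLang.BoundedFormula M 1 :=
    fLn xv ⊓ (listAnd (hSf.toFinset.toList.map fun p => fInc (cst p) xv) ⊓
      listAnd (s.toList.map fun a => fNe xv (cst a))) with hφ
  have hqf : φ.IsQF := (fLn_isQF _).inf ((listAnd_isQF _ (by
      intro ψ hψ
      simp only [List.mem_map] at hψ
      obtain ⟨a, _, rfl⟩ := hψ
      exact fInc_isQF _ _)).inf (listAnd_isQF _ (by
      intro ψ hψ
      simp only [List.mem_map] at hψ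
      obtain ⟨a, _, rfl⟩ := hψ
      exact fNe_isQF _ _)))
  letI := extStruct (M := M) false S
  have hIncO := extStruct_isIncidence false S hM.1 (by simpa using hSpt)
  have hKO := extStruct_kfree_ln m S hM.2.1 (by
    intro a ha hmem
    have := le_ncard_of_inj hSf a ha hmem
    omega)
  have hreal : ∃ xs : Fin 1 → Option M,
      φ.Realize ((extEmb false S : M ↪[IncLang] Option M) : M → Option M) xs := by
    refine ⟨fun _ => none, ?_⟩
    rw [hφ, BoundedFormula.realize_inf, BoundedFormula.realize_inf]
    refine ⟨(realize_fLn _ _ _).2 ((extStruct_ln_none false S).2 rfl), ?_, ?_⟩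
    · rw [realize_listAnd]
      intro ψ hψ
      simp only [List.mem_map] at hψ
      obtain ⟨p, hp, rfl⟩ := hψ
      rw [realize_fInc, realize_xv, realize_cst]
      exact (extStruct_inc_some_none false S p).2 ⟨rfl, hSf.mem_toFinset.1 (Finset.mem_toList.1 hp)⟩
    · rw [realize_listAnd]
      intro ψ hψ
      simp only [List.mem_map] at hψ
      obtain ⟨a, _, rfl⟩ := hψ
      rw [realize_fNe, realize_xv, realize_cst]
      exact fun h => by cases h
  obtain ⟨xs, hxs⟩ := hM.2.2 (Option M) hIncO hKO (extEmb false S) 1 φ hqf hreal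
  rw [hφ, BoundedFormula.realize_inf, BoundedFormula.realize_inf, realize_fLn, realize_xv,
    realize_listAnd, realize_listAnd] at hxs
  refine ⟨xs 0, hxs.1, fun hmem => ?_, fun p hp => ?_⟩
  · have := hxs.2.2 (fNe xv (cst (xs 0))) (List.mem_map.2 ⟨xs 0, Finset.mem_toList.2 hmem, rfl⟩)
    rw [realize_fNe, realize_xv, realize_cst] at this
    exact this rfl
  · have := hxs.2.1 (fInc (cst p) xv)
      (List.mem_map.2 ⟨p, Finset.mem_toList.2 (hSf.mem_toFinset.2 hp), rfl⟩)
    rw [realize_fInc, realize_xv, realize_cst] at this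
    exact this

end ECFacts

/-! The point-set invariant of a line, and its fibers -/

section Classify
variable {m : ℕ} {M : Type u} [IncLang.Structure M]

def Pts (M : Type u) [IncLang.Structure M] : Type u := {x : M // ptL x}

def Lns (M : Type u) [IncLang.Structure M] : Type u := {x : M // lnL x}

def kap {M : Type u} [IncLang.Structure M] (l : Lns M) : Set (Pts M) :=
  {p : Pts M | incL p.1 l.1}

lemma val_image_kap (hInc : IsIncidenceL M) (l : Lns M) :
    Subtype.val '' kap l = {p : M | incL p l.1} := by
  ext z
  constructor
  · rintro ⟨q, hq, rfl⟩; exact hq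
  · intro hz
    exact ⟨⟨z, (hInc.2.2 _ _ hz).1⟩, hz, rfl⟩

lemma kap_finite (hK : KFreeL m 1 M) (hInc : IsIncidenceL M) (l : Lns M) : (kap l).Finite := by
  have h := ptsOn_finite hK hInc l.2
  rw [← val_image_kap hInc l] at h
  exact h.of_finite_image (Set.injOn_of_injective Subtype.val_injective)

lemma kap_ncard (hm : 1 ≤ m) (hM : IsECL m 1 M) (l : Lns M) : (kap l).ncard = m - 1 := by
  have h := ec_line_pts hm hM l.2
  rw [← val_image_kap hM.1 l] at h
  exact (Set.ncard_image_of_injective _ Subtype.val_injective).symm.trans h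

lemma fiber_infinite (hm : 1 ≤ m) (hM : IsECL m 1 M) (S : Set (Pts M)) (hSf : S.Finite)
    (hcard : S.ncard = m - 1) : {l : Lns M | kap l = S}.Infinite := by
  classical
  apply set_infinite_of_avoid
  intro t
  have hS'f : (Subtype.val '' S : Set M).Finite := hSf.image _
  have hS'card : (Subtype.val '' S : Set M).ncard = m - 1 := by
    exact (Set.ncard_image_of_injective _ Subtype.val_injective).trans hcard
  have hS'pt : ∀ p ∈ (Subtype.val '' S : Set M), ptL p := by
    rintro p ⟨q, _, rfl⟩; exact q.2
  obtain ⟨l, hl, hlns, hlinc⟩ := ec_line_through hm hM _ hS'f hS'card hS'pt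
    (t.image Subtype.val)
  refine ⟨⟨l, hl⟩, ?_, ?_⟩
  · show kap ⟨l, hl⟩ = S
    have hsub : S ⊆ kap ⟨l, hl⟩ := fun q hq => hlinc q.1 ⟨q, hq, rfl⟩
    exact (Set.eq_of_subset_of_ncard_le hsub
      (by rw [kap_ncard hm hM ⟨l, hl⟩, hcard]) (kap_finite hM.2.1 hM.1 _)).symm
  · intro hmem
    exact hlns (Finset.mem_image.2 ⟨⟨l, hl⟩, hmem, rfl⟩)

lemma lnL_iff_not_ptL (hInc : IsIncidenceL M) (x : M) : lnL x ↔ ¬ptL x :=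
  ⟨fun hl hp => hInc.2.1 x ⟨hp, hl⟩, fun h => (hInc.1 x).resolve_left h⟩

end Classify

/-- Any two countably infinite existentially closed `K_{m,1}`-free incidence
structures are isomorphic. -/
theorem statement_19 (m : ℕ) (hm : 1 ≤ m)
    {M : Type u} {N : Type v} [IncLang.Structure M] [IncLang.Structure N]
    (hMc : Countable M) (hMi : Infinite M) (hNc : Countable N) (hNi : Infinite N)
    (hM : IsECL m 1 M) (hN : IsECL m 1 N) :
    Nonempty (M ≃[IncLang] N) := by
  classical
  have hPM : {x : M | ptL x}.Infinite :=
    set_infinite_of_avoid fun t => ec_point_avoiding hm hM t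
  have hPN : {x : N | ptL x}.Infinite :=
    set_infinite_of_avoid fun t => ec_point_avoiding hm hN t
  haveI : Infinite (Pts M) := Set.infinite_coe_iff.2 hPM
  haveI : Infinite (Pts N) := Set.infinite_coe_iff.2 hPN
  haveI : Countable (Pts M) := Subtype.countable
  haveI : Countable (Pts N) := Subtype.countable
  haveI : Countable (Lns M) := Subtype.countable
  haveI : Countable (Lns N) := Subtype.countable
  obtain ⟨g⟩ : Nonempty (Pts M ≃ Pts N) := nonempty_equiv_of_countable
  set E : Set (Pts M) ≃ Set (Pts N) := Equiv.Set.congr g with hE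
  have hE_apply : ∀ S : Set (Pts M), E S = g '' S := fun S => rfl
  have fibNonempty : ∀ S : Set (Pts M),
      Nonempty ({l : Lns M // kap l = S} ≃ {l' : Lns N // kap l' = E S}) := by
    intro S
    by_cases hS : S.Finite ∧ S.ncard = m - 1
    · have h1 : {l : Lns M | kap l = S}.Infinite := fiber_infinite hm hM S hS.1 hS.2
      have h2 : {l' : Lns N | kap l' = E S}.Infinite := by
        apply fiber_infinite hm hN
        · rw [hE_apply]; exact hS.1.image _
        · rw [hE_apply, Set.ncard_image_of_injective _ g.injective]; exact hS.2
      haveI : Infinite {l : Lns M // kap l = S} := Set.infinite_coe_iff.2 h1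
      haveI : Infinite {l' : Lns N // kap l' = E S} := Set.infinite_coe_iff.2 h2
      haveI : Countable {l : Lns M // kap l = S} := Subtype.countable
      haveI : Countable {l' : Lns N // kap l' = E S} := Subtype.countable
      exact nonempty_equiv_of_countable
    · haveI : IsEmpty {l : Lns M // kap l = S} := ⟨fun l =>
        hS ⟨l.2 ▸ kap_finite hM.2.1 hM.1 l.1, l.2 ▸ kap_ncard hm hM l.1⟩⟩
      haveI : IsEmpty {l' : Lns N // kap l' = E S} := ⟨fun l => by
        have hf : (E S).Finite := l.2 ▸ kap_finite hN.2.1 hN.1 l.1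
        have hc : (E S).ncard = m - 1 := l.2 ▸ kap_ncard hm hN l.1
        rw [hE_apply] at hf hc
        rw [Set.ncard_image_of_injective _ g.injective] at hc
        exact hS ⟨hf.of_finite_image (Set.injOn_of_injective g.injective), hc⟩⟩
      exact ⟨Equiv.equivOfIsEmpty _ _⟩
  have fE : ∀ S : Set (Pts M), {l : Lns M // kap l = S} ≃ {l' : Lns N // kap l' = E S} :=
    fun S => (fibNonempty S).some
  set hL : Lns M ≃ Lns N :=
    (Equiv.sigmaFiberEquiv (kap (M := M))).symm.trans
      ((Equiv.sigmaCongr E fE).trans (Equiv.sigmaFiberEquiv (kap (M := N)))) with hLdef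
  have hL_prop : ∀ l : Lns M, kap (hL l) = E (kap l) := fun l => (fE (kap l) ⟨l, rfl⟩).2
  have hL_prop_symm : ∀ l' : Lns N, kap (hL.symm l') = E.symm (kap l') := by
    intro l'
    have := hL_prop (hL.symm l')
    rw [hL.apply_symm_apply] at this
    rw [this, Equiv.symm_apply_apply]
  have hMln : ∀ x : M, ¬ptL x → lnL x := fun x h => (hM.1.1 x).resolve_left h
  have hNln : ∀ y : N, ¬ptL y → lnL y := fun y h => (hN.1.1 y).resolve_left h
  set F : M → N := fun x => if h : ptL x then (g ⟨x, h⟩).1 else (hL ⟨x, hMln x h⟩).1 with hFdef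
  set G : N → M := fun y =>
    if h : ptL y then (g.symm ⟨y, h⟩).1 else (hL.symm ⟨y, hNln y h⟩).1 with hGdef
  have hF_pt : ∀ (x : M) (h : ptL x), F x = (g ⟨x, h⟩).1 := fun x h => dif_pos h
  have hF_ln : ∀ (x : M) (h : ¬ptL x), F x = (hL ⟨x, hMln x h⟩).1 := fun x h => dif_neg h
  have hG_pt : ∀ (y : N) (h : ptL y), G y = (g.symm ⟨y, h⟩).1 := fun y h => dif_pos h
  have hG_ln : ∀ (y : N) (h : ¬ptL y), G y = (hL.symm ⟨y, hNln y h⟩).1 := fun y h => dif_neg h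
  have hFpt_iff : ∀ x : M, ptL (F x) ↔ ptL x := by
    intro x
    by_cases h : ptL x
    · rw [hF_pt x h]; exact iff_of_true (g ⟨x, h⟩).2 h
    · rw [hF_ln x h]
      exact iff_of_false ((lnL_iff_not_ptL hN.1 _).1 (hL ⟨x, hMln x h⟩).2) h
  have hFln_iff : ∀ x : M, lnL (F x) ↔ lnL x := by
    intro x
    rw [lnL_iff_not_ptL hN.1, lnL_iff_not_ptL hM.1, hFpt_iff]
  have hGF : ∀ x : M, G (F x) = x := by
    intro x
    by_cases h : ptL x
    · rw [hF_pt x h, hG_pt _ (g ⟨x, h⟩).2]; exact congrArg Subtype.val (g.symm_apply_apply ⟨x, h⟩)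
    · have h2 : ¬ptL ((hL ⟨x, hMln x h⟩).1 : N) :=
        (lnL_iff_not_ptL hN.1 _).1 (hL ⟨x, hMln x h⟩).2
      rw [hF_ln x h, hG_ln _ h2]; exact congrArg Subtype.val (hL.symm_apply_apply ⟨x, hMln x h⟩)
  have hFG : ∀ y : N, F (G y) = y := by
    intro y
    by_cases h : ptL y
    · rw [hG_pt y h, hF_pt _ (g.symm ⟨y, h⟩).2]; exact congrArg Subtype.val (g.apply_symm_apply ⟨y, h⟩)
    · have h2 : ¬ptL ((hL.symm ⟨y, hNln y h⟩).1 : M) :=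
        (lnL_iff_not_ptL hM.1 _).1 (hL.symm ⟨y, hNln y h⟩).2
      rw [hG_ln y h, hF_ln _ h2]; exact congrArg Subtype.val (hL.apply_symm_apply ⟨y, hNln y h⟩)
  set e : M ≃ N := ⟨F, G, hGF, hFG⟩ with hedef
  have hInc_iff : ∀ x y : M, incL (F x) (F y) ↔ incL x y := by
    intro x y
    by_cases hx : ptL x
    · by_cases hy : ptL y
      · refine iff_of_false (fun h => ?_) (fun h => ?_)
        · exact hN.1.2.1 (F y) ⟨(hFpt_iff y).2 hy, (hN.1.2.2 _ _ h).2⟩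
        · exact hM.1.2.1 y ⟨hy, (hM.1.2.2 _ _ h).2⟩
      · rw [hF_pt x hx, hF_ln y hy]
        have hk : kap (hL ⟨y, hMln y hy⟩) = g '' kap ⟨y, hMln y hy⟩ := by
          exact (hL_prop _).trans (hE_apply _)
        constructor
        · intro h
          have hmem : g ⟨x, hx⟩ ∈ kap (hL ⟨y, hMln y hy⟩) := h
          rw [hk] at hmem
          exact (g.injective.mem_set_image).1 hmem
        · intro h
          have hmem : (⟨x, hx⟩ : Pts M) ∈ kap ⟨y, hMln y hy⟩ := h
          have := (g.injective.mem_set_image (s := kap ⟨y, hMln y hy⟩)).2 hmem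
          rw [← hk] at this
          exact this
    · refine iff_of_false (fun h => ?_) (fun h => ?_)
      · exact hx ((hFpt_iff x).1 (hN.1.2.2 _ _ h).1)
      · exact hx (hM.1.2.2 _ _ h).1
  refine ⟨{ toEquiv := e, map_fun' := fun {n} f _ => Empty.elim f, map_rel' := ?_ }⟩
  intro n r x
  cases r with
  | pt =>
    rw [fin1_eta (e.toFun ∘ x), fin1_eta x]
    exact hFpt_iff (x 0)
  | lin =>
    rw [fin1_eta (e.toFun ∘ x), fin1_eta x]
    exact hFln_iff (x 0)
  | inc =>
    rw [fin2_eta (e.toFun ∘ x), fin2_eta x]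
    exact hInc_iff (x 0) (x 1)
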